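/- The implicit component of SSP-LDIRK2(3,3,2) is L-stable: with A = [[1/4,0,0],[0,1/4,0],[1/3,1/3,1/3]] and b = (1/3, 1/3, 1/3), for every z ∈ ℂ with Re z ≤ 0 the matrix I − zA is invertible and the stability function R(z) = 1 + z·bᵀ(I − zA)⁻¹𝟙 satisfies |R(z)| ≤ 1; moreover bᵀA⁻¹𝟙 = 1, so that R(z) → 0 as |z| → ∞. -/

import Mathlib

open Matrix

noncomputable def Mz (z : ℂ) : Matrix (Fin 3) (Fin 3) ℂ :=
  !![1 - z/4, 0, 0; 0, 1 - z/4, 0; -z/3, -z/3, 1 - z/3]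

noncomputable def Nz (z : ℂ) : Matrix (Fin 3) (Fin 3) ℂ :=
  !![4/(4-z), 0, 0; 0, 4/(4-z), 0;
     4*z/((4-z)*(3-z)), 4*z/((4-z)*(3-z)), 3/(3-z)]

lemma mul_MN (z : ℂ) (h1 : (4:ℂ) - z ≠ 0) (h2 : (3:ℂ) - z ≠ 0) :
    Mz z * Nz z = 1 := by
  ext i j
  fin_cases i <;> fin_cases j <;>
    simp [Mz, Nz, Matrix.mul_apply, Fin.sum_univ_three, Matrix.one_apply] <;>
    field_simp <;> ring

lemma Mz_inv (z : ℂ) (h1 : (4:ℂ) - z ≠ 0) (h2 : (3:ℂ) - z ≠ 0) :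
    (Mz z)⁻¹ = Nz z := Matrix.inv_eq_right_inv (mul_MN z h1 h2)

lemma normSq_ineq (z : ℂ) (hz : z.re ≤ 0) :
    Complex.normSq (12 + 5*z) ≤ Complex.normSq ((4-z)*(3-z)) := by
  simp only [Complex.normSq_apply, Complex.add_re, Complex.add_im, Complex.mul_re,
    Complex.mul_im, Complex.sub_re, Complex.sub_im, Complex.re_ofNat, Complex.im_ofNat]
  set x := z.re; set y := z.im
  nlinarith [sq_nonneg (x^2 + y^2), sq_nonneg x, sq_nonneg y, sq_nonneg (x*y),
    mul_nonneg (neg_nonneg.mpr hz) (sq_nonneg x), mul_nonneg (neg_nonneg.mpr hz) (sq_nonneg y)]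

theorem stmt_9 :
    let g : ℝ := 1 - Real.sqrt 2 / 2
    let A : Matrix (Fin 3) (Fin 3) ℝ := !![1/4, 0, 0; 0, 1/4, 0; 1/3, 1/3, 1/3]
    let b : Fin 3 → ℝ := ![1/3, 1/3, 1/3]
    let AC : Matrix (Fin 3) (Fin 3) ℂ := A.map Complex.ofReal
    let bC : Fin 3 → ℂ := fun i => (b i : ℂ)
    let R : ℂ → ℂ := fun z => 1 + z * (bC ⬝ᵥ ((1 - z • AC)⁻¹ *ᵥ 1))
    (∀ z : ℂ, z.re ≤ 0 → IsUnit (1 - z • AC) ∧ ‖R z‖ ≤ 1) ∧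
      b ⬝ᵥ (A⁻¹ *ᵥ 1) = 1 ∧
      Filter.Tendsto R (Filter.comap (fun z : ℂ => ‖z‖) Filter.atTop) (nhds 0) := by
  intro g A b AC bC R
  have hM : ∀ z : ℂ, (1 : Matrix (Fin 3) (Fin 3) ℂ) - z • AC = Mz z := by
    intro z
    ext i j
    fin_cases i <;> fin_cases j <;>
      simp [A, AC, Mz, Matrix.one_apply] <;> ring
  have hR : ∀ z : ℂ, (4:ℂ) - z ≠ 0 → (3:ℂ) - z ≠ 0 →
      R z = (12 + 5*z) / ((4-z)*(3-z)) := by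
    intro z h1 h2
    simp only [R, hM, Mz_inv z h1 h2]
    rw [eq_div_iff (mul_ne_zero h1 h2)]
    simp only [Nz, bC, b, Matrix.mulVec, dotProduct, Fin.sum_univ_three,
      Matrix.cons_val_zero, Matrix.cons_val_one, Matrix.head_cons, Pi.one_apply,
      Matrix.of_apply, Matrix.cons_val', Matrix.empty_val', Matrix.cons_val_fin_one,
      Matrix.head_fin_const, mul_one, Matrix.cons_val_two, Matrix.tail_cons,
      Matrix.cons_val_fin_one]
    push_cast
    have hq : (1296 - z*1512 + (z^2*657 - z^3*126) + z^4*9 : ℂ) ≠ 0 := by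
      have he : (1296 - z*1512 + (z^2*657 - z^3*126) + z^4*9 : ℂ) = 9*((4-z)*(3-z))^2 := by
        ring
      rw [he]
      exact mul_ne_zero (by norm_num) (pow_ne_zero _ (mul_ne_zero h1 h2))
    have hw : (1296 - z*1512 + (z^2*657 - z^3*126) + z^4*9 : ℂ) *
        (1296 - z*1512 + (z^2*657 - z^3*126) + z^4*9 : ℂ)⁻¹ = 1 := mul_inv_cancel₀ hq
    field_simp
    linear_combination
  refine ⟨?_, ?_, ?_⟩
  · intro z hz
    have h1 : (4:ℂ) - z ≠ 0 := by
      intro h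
      rw [sub_eq_zero] at h
      rw [← h] at hz
      norm_num at hz
    have h2 : (3:ℂ) - z ≠ 0 := by
      intro h
      rw [sub_eq_zero] at h
      rw [← h] at hz
      norm_num at hz
    constructor
    · rw [hM]
      exact (Matrix.isUnit_iff_isUnit_det _).mpr (Matrix.isUnit_det_of_right_inverse (mul_MN z h1 h2))
    · rw [hR z h1 h2, norm_div]
      apply div_le_one_of_le₀
      · have := normSq_ineq z hz
        rw [Complex.norm_def, Complex.norm_def]
        exact Real.sqrt_le_sqrt this
      · exact norm_nonneg _
  · have hAinv : A⁻¹ = !![4, 0, 0; 0, 4, 0; -4, -4, 3] := by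
      apply Matrix.inv_eq_right_inv
      ext i j
      fin_cases i <;> fin_cases j <;>
        simp [A, Matrix.mul_apply, Fin.sum_univ_three, Matrix.one_apply] <;> norm_num
    rw [hAinv]
    simp [b, Matrix.mulVec, dotProduct, Fin.sum_univ_three]
    norm_num
  · have habs : Filter.Tendsto (fun z : ℂ => ‖z‖)
        (Filter.comap (fun z : ℂ => ‖z‖) Filter.atTop) Filter.atTop := Filter.tendsto_comap
    rw [tendsto_zero_iff_norm_tendsto_zero]
    have hbound : ∀ᶠ z : ℂ in Filter.comap (fun z : ℂ => ‖z‖) Filter.atTop,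
        ‖R z‖ ≤ 28 / ‖z‖ := by
      filter_upwards [habs.eventually (Filter.eventually_ge_atTop 8)] with z hz8
      have hz1 : (8:ℝ) ≤ ‖z‖ := hz8
      have h1 : (4:ℂ) - z ≠ 0 := by
        intro h
        rw [sub_eq_zero] at h
        rw [← h] at hz1
        norm_num [Complex.norm_ofNat] at hz1
      have h2 : (3:ℂ) - z ≠ 0 := by
        intro h
        rw [sub_eq_zero] at h
        rw [← h] at hz1
        norm_num [Complex.norm_ofNat] at hz1
      rw [hR z h1 h2]
      have hd1 : ‖z‖ / 2 ≤ ‖(4:ℂ) - z‖ := by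
        have h := norm_add_le (z - 4) 4
        have h4 : ‖(4:ℂ) - z‖ = ‖z - 4‖ := norm_sub_rev 4 z
        have h5 : ‖(4:ℂ)‖ = 4 := by norm_num [Complex.norm_ofNat]
        rw [sub_add_cancel, h5] at h
        rw [h4]
        linarith
      have hd2 : ‖z‖ / 2 ≤ ‖(3:ℂ) - z‖ := by
        have h := norm_add_le (z - 3) 3
        have h4 : ‖(3:ℂ) - z‖ = ‖z - 3‖ := norm_sub_rev 3 z
        have h6 : ‖(3:ℂ)‖ = 3 := by norm_num [Complex.norm_ofNat]
        rw [sub_add_cancel, h6] at h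
        rw [h4]
        linarith
      have hnum : ‖12 + 5*z‖ ≤ 7 * ‖z‖ := by
        calc ‖12 + 5*z‖ ≤ ‖(12:ℂ)‖ + ‖5*z‖ :=
              norm_add_le _ _
          _ = 12 + 5 * ‖z‖ := by
              rw [norm_mul]
              norm_num [Complex.norm_ofNat]
          _ ≤ 7 * ‖z‖ := by linarith
      have hzpos : (0:ℝ) < ‖z‖ := by linarith
      rw [norm_div, norm_mul]
      have hdenom : ‖z‖ / 2 * (‖z‖ / 2) ≤
          ‖(4:ℂ) - z‖ * ‖(3:ℂ) - z‖ :=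
        mul_le_mul hd1 hd2 (by positivity) (norm_nonneg _)
      calc ‖12 + 5*z‖ / (‖(4:ℂ)-z‖ * ‖(3:ℂ)-z‖)
          ≤ (7 * ‖z‖) / (‖z‖ / 2 * (‖z‖ / 2)) := by
            apply div_le_div₀ (by positivity) hnum (by positivity) hdenom
        _ = 28 / ‖z‖ := by field_simp; ring
    exact squeeze_zero' (Filter.Eventually.of_forall fun z => norm_nonneg _) hbound
      (Filter.Tendsto.div_atTop tendsto_const_nhds habs)
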